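/- Let h₊(τ) = -log π - γ - 1/(1/4 + τ²) + Σ_{j≥1} (1/j - (4j+1)/((2j+1/2)² + τ²)) for τ ∈ ℝ, where γ is the Euler–Mascheroni constant. Then h₊ attains its minimum at τ = 0 and h₊(0) = -(log(8π) + γ) - π/2. -/

import Mathlib

open Real

/-- The spectral function of the real-place conductor operator on the critical line. -/
noncomputable def hPlus (τ : ℝ) : ℝ :=
  -Real.log Real.pi - Real.eulerMascheroniConstant - 1 / (1/4 + τ^2) +
    ∑' j : ℕ, (1 / ((j:ℝ) + 1) -
      (4 * ((j:ℝ) + 1) + 1) / ((2 * ((j:ℝ) + 1) + 1/2)^2 + τ^2))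

open Filter Finset Topology

namespace HPlusAux

/-- comparison helper -/
lemma summable_aux {f : ℕ → ℝ} {C : ℝ} (h0 : ∀ k, 0 ≤ f k)
    (h : ∀ k, f k ≤ C / ((k:ℝ) + 1)^2) : Summable f := by
  have hs : Summable (fun k : ℕ => C / ((k:ℝ) + 1)^2) := by
    have h1 : Summable (fun k : ℕ => 1 / ((k:ℝ) + 1)^2) := by
      have := (summable_nat_add_iff 1).mpr (Real.summable_one_div_nat_pow.mpr one_lt_two)
      simpa [add_comm] using this
    simpa [div_eq_mul_inv, one_div] using h1.mul_left C
  exact Summable.of_nonneg_of_le h0 h hs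

lemma summable_gen (m c : ℝ) (hm : 1 ≤ m) (hc : 1 ≤ c) :
    Summable (fun k : ℕ => 1/(m*(k:ℝ)+c) - 1/(m*(k:ℝ)+c+1)) := by
  apply summable_aux (C := 1)
  · intro k
    have hk : (0:ℝ) ≤ (k:ℝ) := Nat.cast_nonneg k
    have h1 : 0 < m*(k:ℝ)+c := by nlinarith
    rw [sub_nonneg]
    exact one_div_le_one_div_of_le h1 (by linarith)
  · intro k
    have hk : (0:ℝ) ≤ (k:ℝ) := Nat.cast_nonneg k
    have h1 : 0 < m*(k:ℝ)+c := by nlinarith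
    have h2 : 0 < m*(k:ℝ)+c+1 := by linarith
    have he : 1/(m*(k:ℝ)+c) - 1/(m*(k:ℝ)+c+1) = 1/((m*(k:ℝ)+c)*(m*(k:ℝ)+c+1)) := by
      field_simp
      ring
    rw [he]
    refine one_div_le_one_div_of_le (by positivity) ?_
    have hx : (k:ℝ)+1 ≤ m*(k:ℝ)+c := by nlinarith
    have hy : (k:ℝ)+1 ≤ m*(k:ℝ)+c+1 := by linarith
    calc ((k:ℝ)+1)^2 = ((k:ℝ)+1)*((k:ℝ)+1) := sq ((k:ℝ)+1)
    _ ≤ (m*(k:ℝ)+c)*(m*(k:ℝ)+c+1) := by nlinarith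

noncomputable def fa (k : ℕ) : ℝ := 1 / (4*(k:ℝ)+1) - 1 / (4*(k:ℝ)+2)
noncomputable def fb (k : ℕ) : ℝ := 1 / (4*(k:ℝ)+2) - 1 / (4*(k:ℝ)+3)
noncomputable def fc (k : ℕ) : ℝ := 1 / (4*(k:ℝ)+3) - 1 / (4*(k:ℝ)+4)
noncomputable def fd (k : ℕ) : ℝ := 1 / (4*(k:ℝ)+4) - 1 / (4*(k:ℝ)+5)

lemma summable_fa : Summable fa :=
  (summable_gen 4 1 (by norm_num) (by norm_num)).congr fun k => by unfold fa; ring_nf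
lemma summable_fb : Summable fb :=
  (summable_gen 4 2 (by norm_num) (by norm_num)).congr fun k => by unfold fb; ring_nf
lemma summable_fc : Summable fc :=
  (summable_gen 4 3 (by norm_num) (by norm_num)).congr fun k => by unfold fc; ring_nf
lemma summable_fd : Summable fd :=
  (summable_gen 4 4 (by norm_num) (by norm_num)).congr fun k => by unfold fd; ring_nf

lemma sum_range_two_mul (t : ℕ → ℝ) (n : ℕ) :
    ∑ i ∈ range (2*n), t i = ∑ k ∈ range n, (t (2*k) + t (2*k+1)) := by
  induction n with
  | zero => simp
  | succ n ih =>
    have h2 : 2*(n+1) = (2*n+1)+1 := by ring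
    rw [h2, Finset.sum_range_succ, Finset.sum_range_succ, ih, Finset.sum_range_succ]
    ring

lemma tendsto_two_mul : Tendsto (fun n : ℕ => 2*n) atTop atTop :=
  tendsto_atTop_atTop.mpr fun b => ⟨b, fun a ha => by omega⟩

/-- `A + B = π/4` from Leibniz. -/
lemma fa_add_fb : (∑' k, fa k) + (∑' k, fb k) = π/4 := by
  have hsum : Summable (fun k => fa k + fb k) := summable_fa.add summable_fb
  have hpair : ∀ n : ℕ, ∑ k ∈ range n, (fa k + fb k) =
      ∑ i ∈ range (2*n), ((-1:ℝ)^i / (2*i+1)) := by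
    intro n
    rw [sum_range_two_mul]
    apply Finset.sum_congr rfl
    intro k _
    have e1 : ((-1:ℝ))^(2*k) = 1 := by rw [pow_mul]; norm_num
    have e2 : ((-1:ℝ))^(2*k+1) = -1 := by rw [pow_succ, e1]; ring
    rw [e1, e2]
    unfold fa fb
    push_cast
    ring
  have hlim : Tendsto (fun n : ℕ => ∑ k ∈ range n, (fa k + fb k)) atTop (𝓝 (π/4)) := by
    have := Real.tendsto_sum_pi_div_four.comp tendsto_two_mul
    refine this.congr fun n => ?_
    simp only [Function.comp_apply]
    exact (hpair n).symm
  have := (hsum.hasSum_iff_tendsto_nat).mpr hlim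
  rw [← this.tsum_eq, Summable.tsum_add summable_fa summable_fb]

/-- the alternating harmonic series sums to `log 2` -/
lemma alt_harmonic : Tendsto (fun n : ℕ => ∑ i ∈ range n, ((-1:ℝ)^i / (i+1)))
    atTop (𝓝 (Real.log 2)) := by
  obtain ⟨l, hl⟩ : ∃ l, Tendsto (fun n : ℕ => ∑ i ∈ range n, ((-1:ℝ)^i / (i+1))) atTop (𝓝 l) := by
    obtain ⟨l, hl⟩ := Antitone.tendsto_alternating_series_of_tendsto_zero
      (f := fun i : ℕ => 1/((i:ℝ)+1))
      (antitone_iff_forall_lt.mpr fun a b hab => by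
        refine one_div_le_one_div_of_le (by positivity) ?_
        have : (a:ℝ) ≤ (b:ℝ) := by exact_mod_cast hab.le
        linarith)
      tendsto_one_div_add_atTop_nhds_zero_nat
    exact ⟨l, hl.congr fun n => Finset.sum_congr rfl fun i _ => by rw [mul_one_div]⟩
  have abel := Real.tendsto_tsum_powerSeries_nhdsWithin_lt hl
  have m : 𝓝[<] (1 : ℝ) ≤ 𝓝 1 := nhdsWithin_le_nhds
  have heq : Tendsto (fun x : ℝ => Real.log (1+x) / x) (𝓝[<] 1) (𝓝 l) := by
    apply abel.congr'
    rw [eventuallyEq_nhdsWithin_iff, Metric.eventually_nhds_iff]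
    refine ⟨1, zero_lt_one, fun y hy1 hy2 => ?_⟩
    rw [Real.dist_eq, abs_sub_lt_iff] at hy1
    rw [Set.mem_Iio] at hy2
    have hy0 : 0 < y := by linarith
    have hny : |(-y)| < 1 := by rw [abs_neg, abs_of_pos hy0]; linarith
    have hs := (Real.hasSum_pow_div_log_of_abs_lt_one hny).neg.div_const y
    rw [sub_neg_eq_add, neg_neg] at hs
    have hs2 : HasSum (fun n : ℕ => (-1:ℝ)^n / (n+1) * y^n) (Real.log (1+y) / y) := by
      refine hs.congr_fun fun n => ?_
      have : (-y)^(n+1) = -((-1:ℝ)^n * y^(n+1)) := by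
        rw [neg_pow, pow_succ (-1:ℝ)]
        ring
      rw [this]
      field_simp
      ring
    exact hs2.tsum_eq
  have hcont : Tendsto (fun x : ℝ => Real.log (1+x) / x) (𝓝[<] 1) (𝓝 (Real.log 2)) := by
    have c : ContinuousAt (fun x : ℝ => Real.log (1+x) / x) 1 := by
      apply ContinuousAt.div
      · exact (Real.continuousAt_log (by norm_num)).comp (by fun_prop)
      · fun_prop
      · norm_num
    have h2 := c.tendsto.mono_left m
    norm_num at h2
    exact h2
  rwa [tendsto_nhds_unique heq hcont] at hl

noncomputable def u2 (k : ℕ) : ℝ := 1 / (2*(k:ℝ)+1) - 1 / (2*(k:ℝ)+2)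

lemma summable_u2 : Summable u2 :=
  (summable_gen 2 1 (by norm_num) (by norm_num)).congr fun k => by unfold u2; ring_nf

lemma tsum_u2 : ∑' k, u2 k = Real.log 2 := by
  have hpair : ∀ n : ℕ, ∑ k ∈ range n, u2 k =
      ∑ i ∈ range (2*n), ((-1:ℝ)^i / (i+1)) := by
    intro n
    rw [sum_range_two_mul]
    apply Finset.sum_congr rfl
    intro k _
    have e1 : ((-1:ℝ))^(2*k) = 1 := by rw [pow_mul]; norm_num
    have e2 : ((-1:ℝ))^(2*k+1) = -1 := by rw [pow_succ, e1]; ring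
    rw [e1, e2]
    unfold u2
    push_cast
    ring
  have hlim : Tendsto (fun n : ℕ => ∑ k ∈ range n, u2 k) atTop (𝓝 (Real.log 2)) := by
    have := alt_harmonic.comp tendsto_two_mul
    refine this.congr fun n => ?_
    simp only [Function.comp_apply]
    exact (hpair n).symm
  exact ((summable_u2.hasSum_iff_tendsto_nat).mpr hlim).tsum_eq

/-- `A + C = log 2` by even/odd splitting. -/
lemma fa_add_fc : (∑' k, fa k) + (∑' k, fc k) = Real.log 2 := by
  have hae : ∀ k : ℕ, u2 (2*k) = fa k := by
    intro k; unfold u2 fa; push_cast; ring_nf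
  have hao : ∀ k : ℕ, u2 (2*k+1) = fc k := by
    intro k; unfold u2 fc; push_cast; ring_nf
  have he : Summable (fun k => u2 (2*k)) := by
    rw [funext hae]; exact summable_fa
  have ho : Summable (fun k => u2 (2*k+1)) := by
    rw [funext hao]; exact summable_fc
  have hsplit := tsum_even_add_odd he ho
  rw [tsum_u2] at hsplit
  rw [← hsplit]
  congr 1
  · exact tsum_congr fun k => (hae k).symm
  · exact tsum_congr fun k => (hao k).symm

/-- `B + C = (log 2)/2`. -/
lemma fb_add_fc : (∑' k, fb k) + (∑' k, fc k) = Real.log 2 / 2 := by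
  rw [← Summable.tsum_add summable_fb summable_fc]
  have hterm : ∀ k : ℕ, fb k + fc k = (1/2) * u2 k := by
    intro k; unfold fb fc u2
    have h1 : (0:ℝ) < 4*(k:ℝ)+2 := by positivity
    have h2 : (0:ℝ) < 4*(k:ℝ)+3 := by positivity
    have h3 : (0:ℝ) < 4*(k:ℝ)+4 := by positivity
    have h4 : (0:ℝ) < 2*(k:ℝ)+1 := by positivity
    have h5 : (0:ℝ) < 2*(k:ℝ)+2 := by positivity
    field_simp
    ring
  rw [tsum_congr hterm, tsum_mul_left, tsum_u2]
  ring

/-- `A + B + C + D = 1` by telescoping. -/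
lemma total_one : (∑' k, fa k) + (∑' k, fb k) + (∑' k, fc k) + (∑' k, fd k) = 1 := by
  have hsum : Summable (fun k => fa k + fb k + fc k + fd k) :=
    ((summable_fa.add summable_fb).add summable_fc).add summable_fd
  have htel : ∀ n : ℕ, ∑ k ∈ range n, (fa k + fb k + fc k + fd k) = 1 - 1/(4*(n:ℝ)+1) := by
    intro n
    induction n with
    | zero => simp
    | succ n ih =>
      rw [Finset.sum_range_succ, ih]
      unfold fa fb fc fd
      have h1 : (0:ℝ) < 4*(n:ℝ)+1 := by positivity
      have h2 : (0:ℝ) < 4*(n:ℝ)+2 := by positivity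
      have h3 : (0:ℝ) < 4*(n:ℝ)+3 := by positivity
      have h4 : (0:ℝ) < 4*(n:ℝ)+4 := by positivity
      have h5 : (0:ℝ) < 4*(n:ℝ)+5 := by positivity
      have h6 : (0:ℝ) < 4*((n:ℝ)+1)+1 := by positivity
      push_cast
      field_simp
      ring
  have hz : Tendsto (fun n : ℕ => 1/(4*(n:ℝ)+1)) atTop (𝓝 0) := by
    simp only [one_div]
    exact Tendsto.comp tendsto_inv_atTop_zero
      (tendsto_atTop_add_const_right _ 1 (tendsto_natCast_atTop_atTop.const_mul_atTop four_pos))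
  have hlim : Tendsto (fun n : ℕ => ∑ k ∈ range n, (fa k + fb k + fc k + fd k))
      atTop (𝓝 1) := by
    have h1 := (tendsto_const_nhds (x := (1:ℝ)) (f := atTop (α := ℕ))).sub hz
    rw [sub_zero] at h1
    exact h1.congr fun n => (htel n).symm
  have := (hsum.hasSum_iff_tendsto_nat).mpr hlim
  rw [← this.tsum_eq, Summable.tsum_add (((summable_fa.add summable_fb)).add summable_fc) summable_fd,
    Summable.tsum_add (summable_fa.add summable_fb) summable_fc, Summable.tsum_add summable_fa summable_fb]

lemma tsum_fd : ∑' k, fd k = 1 - π/8 - (3/4) * Real.log 2 := by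
  have h1 := fa_add_fb
  have h2 := fa_add_fc
  have h3 := fb_add_fc
  have h4 := total_one
  linarith

/-- The general term of the `hPlus` series. -/
noncomputable def F (τ : ℝ) (j : ℕ) : ℝ :=
  1 / ((j:ℝ) + 1) - (4 * ((j:ℝ) + 1) + 1) / ((2 * ((j:ℝ) + 1) + 1/2)^2 + τ^2)

lemma summable_F (τ : ℝ) : Summable (F τ) := by
  apply summable_aux (C := 9/4 + τ^2)
  · intro j; unfold F
    have hj : (0:ℝ) ≤ (j:ℝ) := Nat.cast_nonneg j
    have h1 : (0:ℝ) < (j:ℝ)+1 := by positivity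
    have h2 : (0:ℝ) < (2*((j:ℝ)+1)+1/2)^2 + τ^2 := by positivity
    rw [sub_nonneg, div_le_div_iff₀ h2 h1]
    nlinarith [sq_nonneg τ]
  · intro j; unfold F
    have hj : (0:ℝ) ≤ (j:ℝ) := Nat.cast_nonneg j
    have h1 : (0:ℝ) < (j:ℝ)+1 := by positivity
    have h2 : (0:ℝ) < (2*((j:ℝ)+1)+1/2)^2 + τ^2 := by positivity
    have he : 1 / ((j:ℝ) + 1) - (4 * ((j:ℝ) + 1) + 1) / ((2 * ((j:ℝ) + 1) + 1/2)^2 + τ^2)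
        = ((j:ℝ) + 5/4 + τ^2) / (((j:ℝ)+1) * ((2 * ((j:ℝ) + 1) + 1/2)^2 + τ^2)) := by
      field_simp
      ring
    rw [he, div_le_div_iff₀ (by positivity) (by positivity)]
    nlinarith [sq_nonneg τ, sq_nonneg ((j:ℝ)+1), mul_nonneg (sq_nonneg τ) hj,
      mul_nonneg (mul_nonneg hj hj) hj, mul_nonneg (sq_nonneg τ) (mul_nonneg hj hj)]

lemma F_zero_eq (j : ℕ) : F 0 j = 4 * fd j := by
  unfold F fd
  have h1 : (0:ℝ) < (j:ℝ)+1 := by positivity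
  have h2 : (0:ℝ) < 4*(j:ℝ)+4 := by positivity
  have h3 : (0:ℝ) < 4*(j:ℝ)+5 := by positivity
  have h4 : (0:ℝ) < (2*((j:ℝ)+1)+1/2)^2 := by positivity
  rw [zero_pow two_ne_zero, add_zero]
  field_simp
  ring

lemma tsum_F_zero : ∑' j, F 0 j = 4 - π/2 - 3 * Real.log 2 := by
  rw [tsum_congr F_zero_eq, tsum_mul_left, tsum_fd]
  ring

lemma F_mono (τ : ℝ) (j : ℕ) : F 0 j ≤ F τ j := by
  unfold F
  apply sub_le_sub_left
  apply div_le_div_of_nonneg_left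
  · have hj : (0:ℝ) ≤ (j:ℝ) := Nat.cast_nonneg j
    nlinarith
  · positivity
  · nlinarith [sq_nonneg τ]

end HPlusAux

theorem hPlus_min_at_zero :
    (∀ τ : ℝ, hPlus 0 ≤ hPlus τ) ∧
      hPlus 0 = -(Real.log (8 * Real.pi) + Real.eulerMascheroniConstant) - Real.pi / 2 := by
  constructor
  · intro τ
    unfold hPlus
    have ht : ∑' j, HPlusAux.F 0 j ≤ ∑' j, HPlusAux.F τ j :=
      Summable.tsum_le_tsum (HPlusAux.F_mono τ) (HPlusAux.summable_F 0) (HPlusAux.summable_F τ)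
    have hd : 1 / (1/4 + τ^2) ≤ 1 / (1/4 + (0:ℝ)^2) :=
      one_div_le_one_div_of_le (by norm_num) (by nlinarith [sq_nonneg τ])
    unfold HPlusAux.F at ht
    linarith [ht, hd]
  · unfold hPlus
    have ht : (∑' j : ℕ, (1 / ((j:ℝ) + 1) -
        (4 * ((j:ℝ) + 1) + 1) / ((2 * ((j:ℝ) + 1) + 1/2)^2 + (0:ℝ)^2)))
        = 4 - π/2 - 3 * Real.log 2 := HPlusAux.tsum_F_zero
    rw [ht]
    have h8 : Real.log (8 * Real.pi) = 3 * Real.log 2 + Real.log Real.pi := by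
      rw [Real.log_mul (by norm_num) Real.pi_ne_zero]
      have h83 : (8:ℝ) = 2^3 := by norm_num
      rw [h83, Real.log_pow]
      push_cast; ring
    rw [h8]
    norm_num
    ring
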